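/- arXiv:2212.09861 — 2 statements merged into one kernel-verified Lean document; each statement's English description precedes it below -/
import Mathlib

section
/- For the cycle C_n on n ≥ 3 vertices, the 2-L-Grundy domination number satisfies γ_gr^{L,2}(C_n) = n. -/
/-- A sequence `S` of distinct vertices is a generalized `k`-Grundy sequence with respect to
neighborhood assignments `N₁` (where the footprinted vertex must lie relative to the new
vertex) and `N₂` (the neighborhoods of earlier vertices that must contain the footprinted
vertex fewer than `k` times): for each position `i` there is a vertex `u ∈ N₁ (S i)` that
belongs to `N₂ w` for fewer than `k` of the vertices `w` preceding position `i`. -/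
def IsGrundySeq {V : Type*} (k : ℕ) (N₁ N₂ : V → Set V) (S : List V) : Prop :=
  S.Nodup ∧ ∀ (i : ℕ) (hi : i < S.length),
    ∃ u ∈ N₁ (S.get ⟨i, hi⟩), {w | w ∈ S.take i ∧ u ∈ N₂ w}.ncard < k

/-- The length of a longest generalized `k`-Grundy sequence. -/
noncomputable def grundyVal {V : Type*} (k : ℕ) (N₁ N₂ : V → Set V) : ℕ :=
  sSup {m | ∃ S : List V, IsGrundySeq k N₁ N₂ S ∧ S.length = m}

/-- The closed neighborhood `N[v]` of a vertex. -/
def closedNbhd {V : Type*} (G : SimpleGraph V) (v : V) : Set V :=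
  insert v (G.neighborSet v)

/-- The `k`-Grundy domination number `γ_gr^k(G)`. -/
noncomputable def kGrundy {V : Type*} (G : SimpleGraph V) (k : ℕ) : ℕ :=
  grundyVal k (closedNbhd G) (closedNbhd G)

/-- The `k`-`L`-Grundy domination number `γ_gr^{L,k}(G)`. -/
noncomputable def kLGrundy {V : Type*} (G : SimpleGraph V) (k : ℕ) : ℕ :=
  grundyVal k (closedNbhd G) G.neighborSet

/-- The `k`-`Z`-Grundy domination number `γ_gr^{Z,k}(G)`. -/
noncomputable def kZGrundy {V : Type*} (G : SimpleGraph V) (k : ℕ) : ℕ :=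
  grundyVal k G.neighborSet (closedNbhd G)

/-- The `k`-`t`-Grundy domination number `γ_gr^{t,k}(G)`. -/
noncomputable def ktGrundy {V : Type*} (G : SimpleGraph V) (k : ℕ) : ℕ :=
  grundyVal k G.neighborSet G.neighborSet

lemma mem_take_finRange {n i : ℕ} {w : Fin n} (hw : w ∈ (List.finRange n).take i) :
    (w : ℕ) < i := by
  rw [List.mem_iff_getElem] at hw
  obtain ⟨j, hj, rfl⟩ := hw
  have hj' : j < i := lt_of_lt_of_le hj (by simp [List.length_take])
  rw [List.getElem_take]
  simp [List.getElem_finRange]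
  omega

/-- For `n ≥ 3`, `γ_gr^{L,2}(C_n) = n`. -/
theorem kLGrundy_cycleGraph (n : ℕ) (hn : 3 ≤ n) :
    kLGrundy (SimpleGraph.cycleGraph n) 2 = n := by
  obtain ⟨m, rfl⟩ : ∃ m, n = m + 3 := ⟨n - 3, by omega⟩
  set n := m + 3 with hn3
  have hmem : n ∈ {l | ∃ S : List (Fin n),
      IsGrundySeq 2 (closedNbhd (SimpleGraph.cycleGraph n)) (SimpleGraph.cycleGraph n).neighborSet S ∧
      S.length = l} := by
    refine ⟨List.finRange n, ⟨List.nodup_finRange n, ?_⟩, List.length_finRange⟩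
    intro i hi
    have hi' : i < n := by simpa using hi
    set v : Fin n := (List.finRange n).get ⟨i, hi⟩ with hv
    have hvval : (v : ℕ) = i := by simp [hv, List.get_finRange]
    refine ⟨v + 1, ?_, ?_⟩
    · refine Or.inr ?_
      show (SimpleGraph.cycleGraph (m + 1 + 2)).Adj v (v + 1)
      rw [SimpleGraph.cycleGraph_adj]
      right; simp
    · have hsub : {w | w ∈ (List.finRange n).take i ∧
          v + 1 ∈ (SimpleGraph.cycleGraph n).neighborSet w} ⊆ {v + 2} := by
        rintro w ⟨hw1, hw2⟩
        have hlt := mem_take_finRange hw1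
        have hadj : (SimpleGraph.cycleGraph (m + 1 + 2)).Adj w (v + 1) := hw2
        rw [SimpleGraph.cycleGraph_adj] at hadj
        rcases hadj with h | h
        · -- w - (v+1) = 1 → w = v + 2
          have : w = v + 2 := by
            have := sub_eq_iff_eq_add.mp h
            rw [this]; open Fin.CommRing in ring
          simp [this]
        · -- (v+1) - w = 1 → w = v, contradiction
          have hwv : w = v := by
            have := sub_eq_iff_eq_add.mp h
            have : v + 1 = w + 1 := by rw [this]; open Fin.CommRing in ring
            exact (add_left_injective 1 this).symm
          exfalso
          rw [hwv, hvval] at hlt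
          omega
      calc {w | w ∈ (List.finRange n).take i ∧
          v + 1 ∈ (SimpleGraph.cycleGraph n).neighborSet w}.ncard
          ≤ ({v + 2} : Set (Fin n)).ncard :=
            Set.ncard_le_ncard hsub (Set.finite_singleton _)
        _ = 1 := Set.ncard_singleton _
        _ < 2 := one_lt_two
  have hbdd : ∀ l ∈ {l | ∃ S : List (Fin n),
      IsGrundySeq 2 (closedNbhd (SimpleGraph.cycleGraph n)) (SimpleGraph.cycleGraph n).neighborSet S ∧
      S.length = l}, l ≤ n := by
    rintro l ⟨S, ⟨hnd, _⟩, rfl⟩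
    simpa using hnd.length_le_card
  unfold kLGrundy grundyVal
  exact le_antisymm (csSup_le ⟨n, hmem⟩ hbdd) (le_csSup ⟨n, hbdd⟩ hmem)
end

section
/- For the cycle C_n on n ≥ 3 vertices, the 2-Z-Grundy domination number satisfies γ_gr^{Z,2}(C_n) = n − 1. -/
open Fin.CommRing

section helpers

variable {m : ℕ}

lemma fin2_ne_zero : (2 : Fin (m+3)) ≠ 0 := by
  simp [Fin.ext_iff, Fin.val_two]
  rw [Nat.mod_eq_of_lt (by omega)]; omega

lemma fin1_ne_zero : (1 : Fin (m+3)) ≠ 0 := by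
  simp [Fin.ext_iff]

lemma fin_sub_one_ne_add_one (a : Fin (m+3)) : a - 1 ≠ a + 1 := by
  intro h
  apply fin2_ne_zero (m := m)
  have h2 : (2 : Fin (m+3)) = (a+1) - (a-1) := by ring
  rw [h2, ← h, sub_self]

lemma fin_add_one_ne (a : Fin (m+3)) : a + 1 ≠ a := by
  intro h
  apply fin1_ne_zero (m := m)
  have h1 : (1 : Fin (m+3)) = (a+1) - a := by ring
  rw [h1, h, sub_self]

lemma fin_sub_one_ne (a : Fin (m+3)) : a - 1 ≠ a := by
  intro h
  apply fin1_ne_zero (m := m)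
  have h1 : (1 : Fin (m+3)) = a - (a-1) := by ring
  rw [h1, h, sub_self]

end helpers

/-- For `n ≥ 3`, `γ_gr^{Z,2}(C_n) = n - 1`. -/
theorem kZGrundy_cycleGraph (n : ℕ) (hn : 3 ≤ n) :
    kZGrundy (SimpleGraph.cycleGraph n) 2 = n - 1 := by
  obtain ⟨m, rfl⟩ : ∃ m, n = m + 3 := ⟨n - 3, by omega⟩
  set G := SimpleGraph.cycleGraph (m+3) with hG
  have hN : ∀ v : Fin (m+3), G.neighborSet v = {v - 1, v + 1} := fun v =>
    SimpleGraph.cycleGraph_neighborSet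
  have hM : ∀ u w : Fin (m+3), u ∈ closedNbhd G w ↔ w = u ∨ w = u - 1 ∨ w = u + 1 := by
    intro u w
    have h : closedNbhd G w = {w, w-1, w+1} := by rw [closedNbhd, hN]
    rw [h]
    simp only [Set.mem_insert_iff, Set.mem_singleton_iff]
    constructor
    · rintro (rfl|rfl|rfl)
      · exact Or.inl rfl
      · right; right; ring
      · right; left; ring
    · rintro (rfl|rfl|rfl)
      · exact Or.inl rfl
      · right; right; ring
      · right; left; ring
  -- upper bound
  have key : ∀ S : List (Fin (m+3)), IsGrundySeq 2 G.neighborSet (closedNbhd G) S →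
      S.length ≤ m + 2 := by
    rintro S ⟨hnd, hseq⟩
    by_contra hcon
    push_neg at hcon
    have hcard : S.length ≤ m + 3 := by simpa using hnd.length_le_card
    have hlen : S.length = m + 3 := le_antisymm hcard hcon
    obtain ⟨u, hu, hcount⟩ := hseq (m+2) (by omega)
    set v := S.get ⟨m+2, by omega⟩ with hv
    rw [hN] at hu
    have hmemS : ∀ y : Fin (m+3), y ∈ S := by
      have h2 : S.toFinset = Finset.univ :=
        Finset.eq_univ_of_card _ (by rw [List.toFinset_card_of_nodup hnd, hlen]; simp)
      intro y; simpa [← h2] using Finset.mem_univ y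
    have hmemtake : ∀ y : Fin (m+3), y ≠ v → y ∈ S.take (m+2) := by
      intro y hy
      obtain ⟨j, hj, rfl⟩ := List.getElem_of_mem (hmemS y)
      have hj' : j ≠ m + 2 := by
        intro h'; apply hy; subst h'; rw [hv]; rfl
      have hg : (S.take (m+2))[j]'(by simp; omega) = S[j] := List.getElem_take ..
      rw [← hg]; exact List.getElem_mem _
    have main : ∀ x : Fin (m+3), x ≠ v → u ≠ v → u ≠ x → u ∈ closedNbhd G x → False := by
      intro x hxv huv hux hcx
      have hsub : ({u, x} : Set (Fin (m+3))) ⊆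
          {w | w ∈ S.take (m+2) ∧ u ∈ closedNbhd G w} := by
        intro y hy
        rcases hy with rfl | rfl
        · exact ⟨hmemtake _ huv, (hM y y).mpr (Or.inl rfl)⟩
        · exact ⟨hmemtake _ hxv, hcx⟩
      have h2 : 2 ≤ ({w | w ∈ S.take (m+2) ∧ u ∈ closedNbhd G w}).ncard := by
        calc 2 = ({u, x} : Set (Fin (m+3))).ncard := (Set.ncard_pair hux).symm
          _ ≤ _ := Set.ncard_le_ncard hsub (Set.toFinite _)
      omega
    rcases hu with hu | hu
    · -- u = v - 1
      have hv1 : v = u + 1 := by rw [hu]; ring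
      refine main (u - 1) ?_ ?_ ?_ ((hM u (u-1)).mpr (Or.inr (Or.inl rfl)))
      · rw [hv1]; exact fin_sub_one_ne_add_one u
      · rw [hv1]; exact (fin_add_one_ne u).symm
      · exact (fin_sub_one_ne u).symm
    · -- u = v + 1
      have hv1 : v = u - 1 := by rw [hu]; ring
      refine main (u + 1) ?_ ?_ ?_ ((hM u (u+1)).mpr (Or.inr (Or.inr rfl)))
      · rw [hv1]; exact (fin_sub_one_ne_add_one u).symm
      · rw [hv1]; exact (fin_sub_one_ne u).symm
      · exact (fin_add_one_ne u).symm
  -- lower bound witness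
  have hlow : ∃ S : List (Fin (m+3)), IsGrundySeq 2 G.neighborSet (closedNbhd G) S ∧
      S.length = m + 2 := by
    refine ⟨(List.finRange (m+3)).take (m+2), ⟨?_, ?_⟩, by simp⟩
    · exact (List.take_sublist _ _).nodup (List.nodup_finRange _)
    · intro i hi
      have hi' : i < m + 2 := by simpa using hi
      have hvget : ((List.finRange (m+3)).take (m+2)).get ⟨i, hi⟩ = (⟨i, by omega⟩ : Fin (m+3)) := by
        rw [List.get_eq_getElem]
        have hg : ((List.finRange (m+3)).take (m+2))[i]'hi = (List.finRange (m+3))[i]'(by simp; omega) :=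
          List.getElem_take ..
        rw [hg]; simp
      set v : Fin (m+3) := ⟨i, by omega⟩ with hvdef
      refine ⟨v + 1, ?_, ?_⟩
      · rw [hvget, hN]; exact Set.mem_insert_iff.mpr (Or.inr rfl)
      · have hsub : {w | w ∈ ((List.finRange (m+3)).take (m+2)).take i ∧ v + 1 ∈ closedNbhd G w}
            ⊆ {v + 2} := by
          rintro w ⟨hw1, hw2⟩
          rw [hM] at hw2
          have hwv : w.val < i := by
            obtain ⟨j, hj, rfl⟩ := List.getElem_of_mem hw1
            have hjlen : j < i := by simp at hj; omega
            have hg1 : (((List.finRange (m+3)).take (m+2)).take i)[j]'hj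
                = ((List.finRange (m+3)).take (m+2))[j]'(by simp; omega) := List.getElem_take ..
            have hg2 : ((List.finRange (m+3)).take (m+2))[j]'(by simp; omega)
                = (List.finRange (m+3))[j]'(by simp; omega) := List.getElem_take ..
            rw [hg1, hg2]
            simpa using hjlen
          have hval1 : (v + 1).val = i + 1 :=
            Fin.val_add_one_of_lt (by simp [Fin.lt_iff_val_lt_val, Fin.last, hvdef]; omega)
          rcases hw2 with rfl | rfl | rfl
          · omega
          · have he : v + 1 - 1 = v := by ring
            rw [he] at hwv
            simp [hvdef] at hwv
          · have he : v + 1 + 1 = v + 2 := by ring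
            rw [he]; rfl
        have hle := Set.ncard_le_ncard hsub (Set.finite_singleton _)
        rw [Set.ncard_singleton] at hle
        omega
  -- conclude
  rw [kZGrundy, grundyVal]
  obtain ⟨S₀, hS₀, hS₀len⟩ := hlow
  have hne : (0 : ℕ) ∈ {t | ∃ S : List (Fin (m+3)),
      IsGrundySeq 2 G.neighborSet (closedNbhd G) S ∧ S.length = t} :=
    ⟨[], ⟨List.nodup_nil, fun i hi => by simp at hi⟩, rfl⟩
  have hbdd : BddAbove {t | ∃ S : List (Fin (m+3)),
      IsGrundySeq 2 G.neighborSet (closedNbhd G) S ∧ S.length = t} := by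
    refine ⟨m+2, ?_⟩
    rintro t ⟨S, hS, rfl⟩
    exact key S hS
  apply le_antisymm
  · refine csSup_le ⟨0, hne⟩ ?_
    rintro t ⟨S, hS, rfl⟩
    have := key S hS
    omega
  · have := le_csSup hbdd ⟨S₀, hS₀, hS₀len⟩
    simpa using this
end
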